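/- arXiv:0811.1097 — 2 statements merged into one kernel-verified Lean document; each statement's English description precedes it below -/
import Mathlib

section
/- Almost surely, the total variation distance between the normalized invariant probability measure ρ̂ = (ρ_1 + ⋯ + ρ_n)^{-1}·(ρ_1 δ_1 + ⋯ + ρ_n δ_n) of K and the uniform probability measure U_n = (1/n)·(δ_1 + ⋯ + δ_n) on {1,…,n} tends to 0 as n → ∞, where the total variation distance is ‖μ−ν‖_TV = (1/2)·Σ_{k=1}^n |μ_k − ν_k|. -/
open MeasureTheory ProbabilityTheory Filter Topology

/-- Row sums `ρ_i = ∑_{j<n} U_{i,j}` of the weight array. -/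
noncomputable def rowSum {Ω : Type*} (U : ℕ → ℕ → Ω → ℝ) (n : ℕ) (ω : Ω) (i : ℕ) : ℝ :=
  ∑ j ∈ Finset.range n, U i j ω

namespace CGIMaux

/-- triangular numbers -/
def tri (n : ℕ) : ℕ := ∑ i ∈ Finset.range n, i

lemma tri_succ (n : ℕ) : tri (n + 1) = tri n + n := Finset.sum_range_succ _ _

lemma tri_mono : Monotone tri := by
  intro a b hab
  exact Finset.sum_le_sum_of_subset (Finset.range_subset_range.2 hab)

lemma pred_le_tri (n : ℕ) : n - 1 ≤ tri n := by
  cases n with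
  | zero => simp [tri]
  | succ m => simp [tri_succ]

lemma tri_lt_tri_succ (n : ℕ) (hn : 1 ≤ n) : tri n < tri (n + 1) := by
  rw [tri_succ]; omega

/-- the column of index k in the enumeration of pairs (i,j) with i < j -/
def col (k : ℕ) : ℕ := Nat.findGreatest (fun j => tri j ≤ k) (k + 1)

lemma tri_col_le (k : ℕ) : tri (col k) ≤ k :=
  Nat.findGreatest_spec (P := fun j => tri j ≤ k) (m := 0) (Nat.zero_le _) (by simp [tri])

lemma lt_tri_col_succ (k : ℕ) : k < tri (col k + 1) := by
  by_cases h : col k + 1 ≤ k + 1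
  · have := Nat.findGreatest_is_greatest (P := fun j => tri j ≤ k) (n := k + 1)
      (k := col k + 1) (Nat.lt_succ_self _) h
    omega
  · have h2 : k + 1 ≤ col k + 1 := le_of_not_ge h
    have := pred_le_tri (col k + 1)
    omega

lemma col_pos (k : ℕ) : 0 < col k := by
  by_contra h
  have h0 : col k = 0 := by omega
  have := lt_tri_col_succ k
  rw [h0] at this
  simp [tri] at this

lemma col_eq (j i : ℕ) (h : i < j) : col (tri j + i) = j := by
  have h1 : j ≤ col (tri j + i) := by
    apply Nat.le_findGreatest
    · have := pred_le_tri j; omega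
    · exact Nat.le_add_right _ _
  have h2 : col (tri j + i) ≤ j := by
    by_contra hc
    have hc' : j + 1 ≤ col (tri j + i) := by omega
    have := tri_mono hc'
    rw [tri_succ] at this
    have := tri_col_le (tri j + i)
    omega
  omega

/-- enumeration of pairs (i, j) with i < j -/
def epair (k : ℕ) : ℕ × ℕ := (k - tri (col k), col k)

lemma epair_lt (k : ℕ) : (epair k).1 < (epair k).2 := by
  have h1 := tri_col_le k
  have h2 := lt_tri_col_succ k
  rw [tri_succ] at h2
  simp only [epair]
  omega

lemma epair_idx (k : ℕ) : tri (epair k).2 + (epair k).1 = k := by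
  have h1 := tri_col_le k
  simp only [epair]
  omega

lemma epair_injective : Function.Injective epair := by
  intro k l h
  have h1 := epair_idx k
  rw [h] at h1
  rw [epair_idx l] at h1
  exact h1.symm

lemma epair_eq (j i : ℕ) (h : i < j) : epair (tri j + i) = (i, j) := by
  have hc := col_eq j i h
  simp [epair, hc]

lemma sum_epair (f : ℕ → ℕ → ℝ) (n : ℕ) :
    ∑ k ∈ Finset.range (tri n), f (epair k).1 (epair k).2
      = ∑ j ∈ Finset.range n, ∑ i ∈ Finset.range j, f i j := by
  induction n with
  | zero => simp [tri]
  | succ m ih =>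
    rw [tri_succ, Finset.sum_range_succ, ← ih]
    rw [Finset.sum_range_add]
    congr 1
    apply Finset.sum_congr rfl
    intro i hi
    rw [epair_eq m i (Finset.mem_range.1 hi)]

lemma square_sum (f : ℕ → ℕ → ℝ) (hf : ∀ i j, f i j = f j i) (n : ℕ) :
    ∑ i ∈ Finset.range n, ∑ j ∈ Finset.range n, f i j
      = 2 * (∑ j ∈ Finset.range n, ∑ i ∈ Finset.range j, f i j)
        + ∑ i ∈ Finset.range n, f i i := by
  induction n with
  | zero => simp
  | succ m ih =>
    have e1 : ∑ i ∈ Finset.range (m+1), ∑ j ∈ Finset.range (m+1), f i j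
        = (∑ i ∈ Finset.range m, ∑ j ∈ Finset.range m, f i j)
          + ∑ i ∈ Finset.range m, f i m + (∑ j ∈ Finset.range m, f m j + f m m) := by
      rw [Finset.sum_range_succ]
      congr 1
      · rw [← Finset.sum_add_distrib]
        apply Finset.sum_congr rfl
        intro i _
        rw [Finset.sum_range_succ]
      · rw [Finset.sum_range_succ]
    have e2 : ∑ j ∈ Finset.range m, f m j = ∑ i ∈ Finset.range m, f i m :=
      Finset.sum_congr rfl (fun i _ => hf m i)
    rw [e1, e2, ih, Finset.sum_range_succ (f := fun j => ∑ i ∈ Finset.range j, f i j),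
      Finset.sum_range_succ (f := fun i => f i i)]
    ring


section SLLN

variable {Ω : Type*} [MeasurableSpace Ω] {P : Measure Ω} [IsProbabilityMeasure P]
  {U : ℕ → ℕ → Ω → ℝ} {L : Measure ℝ} [IsProbabilityMeasure L]

lemma slln_of_inj (hmeas : ∀ i j, Measurable (U i j))
    (hdist : ∀ i j, Measure.map (U i j) P = L)
    (hindep : iIndepFun
      (fun p : {q : ℕ × ℕ // q.1 ≤ q.2} => U p.1.1 p.1.2) P)
    (g : ℝ → ℝ) (hg : Measurable g) (hgi : Integrable g L)
    (e : ℕ → ℕ × ℕ) (he : ∀ k, (e k).1 ≤ (e k).2) (hinj : Function.Injective e) :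
    ∀ᵐ ω ∂P, Tendsto (fun m : ℕ => (m : ℝ)⁻¹ * ∑ k ∈ Finset.range m, g (U (e k).1 (e k).2 ω))
      atTop (𝓝 (∫ x, g x ∂L)) := by
  set X : ℕ → Ω → ℝ := fun k ω => g (U (e k).1 (e k).2 ω) with hX
  have hXmeas : ∀ k, Measurable (X k) := fun k => hg.comp (hmeas _ _)
  have hident : ∀ k, IdentDistrib (X k) (X 0) P P := by
    intro k
    refine ⟨(hXmeas k).aemeasurable, (hXmeas 0).aemeasurable, ?_⟩
    have h1 : Measure.map (X k) P = Measure.map g (Measure.map (U (e k).1 (e k).2) P) :=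
      (Measure.map_map hg (hmeas _ _)).symm
    have h2 : Measure.map (X 0) P = Measure.map g (Measure.map (U (e 0).1 (e 0).2) P) :=
      (Measure.map_map hg (hmeas _ _)).symm
    rw [h1, h2, hdist, hdist]
  have hpair : Pairwise (Function.onFun (IndepFun · · P) X) := by
    intro k l hkl
    have hne : (⟨e k, he k⟩ : {q : ℕ × ℕ // q.1 ≤ q.2}) ≠ ⟨e l, he l⟩ := by
      simp only [ne_eq, Subtype.mk.injEq]
      exact hinj.ne hkl
    exact ((hindep.indepFun hne).comp hg hg)
  have hint : Integrable (X 0) P := by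
    have h0 : Integrable g (Measure.map (U (e 0).1 (e 0).2) P) := by rw [hdist]; exact hgi
    exact (integrable_map_measure hg.aestronglyMeasurable (hmeas _ _).aemeasurable).mp h0
  have hmean : ∫ ω, X 0 ω ∂P = ∫ x, g x ∂L := by
    rw [← hdist (e 0).1 (e 0).2, integral_map (hmeas _ _).aemeasurable hg.aestronglyMeasurable]
  have h := strong_law_ae X hint hpair hident
  rw [hmean] at h
  filter_upwards [h] with ω hω
  simpa [smul_eq_mul] using hω

lemma array_slln (hmeas : ∀ i j, Measurable (U i j)) (hsymm : ∀ i j, U i j = U j i)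
    (hdist : ∀ i j, Measure.map (U i j) P = L)
    (hindep : iIndepFun
      (fun p : {q : ℕ × ℕ // q.1 ≤ q.2} => U p.1.1 p.1.2) P)
    (g : ℝ → ℝ) (hg : Measurable g) (hgi : Integrable g L) :
    ∀ᵐ ω ∂P, Tendsto (fun n : ℕ =>
        (((n : ℝ))^2)⁻¹ * ∑ i ∈ Finset.range n, ∑ j ∈ Finset.range n, g (U i j ω))
      atTop (𝓝 (∫ x, g x ∂L)) := by
  have hoff := slln_of_inj hmeas hdist hindep g hg hgi (fun k => epair k)
    (fun k => (epair_lt k).le) epair_injective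
  have hdiag := slln_of_inj hmeas hdist hindep g hg hgi (fun i => (i, i))
    (fun i => le_rfl) (fun a b hab => by simpa using congrArg Prod.fst hab)
  filter_upwards [hoff, hdiag] with ω h1 h2
  set μ := ∫ x, g x ∂L with hμ
  set S : ℕ → ℝ := fun m => ∑ k ∈ Finset.range m, g (U (epair k).1 (epair k).2 ω) with hS
  set D : ℕ → ℝ := fun n => ∑ i ∈ Finset.range n, g (U i i ω) with hD
  have key : ∀ n, ∑ i ∈ Finset.range n, ∑ j ∈ Finset.range n, g (U i j ω)
      = 2 * S (tri n) + D n := by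
    intro n
    rw [hS]
    simp only
    rw [sum_epair (fun i j => g (U i j ω)) n]
    exact square_sum _ (fun i j => by rw [hsymm]) n
  have htri : Tendsto tri atTop atTop := by
    apply Filter.tendsto_atTop_atTop.2
    intro b
    refine ⟨b + 1, fun n hn => le_trans (by omega : b ≤ n - 1) (pred_le_tri n)⟩
  have hn0 : Tendsto (fun n : ℕ => ((n : ℝ))⁻¹) atTop (𝓝 0) :=
    tendsto_inv_atTop_zero.comp tendsto_natCast_atTop_atTop
  have ha : Tendsto (fun n => ((tri n : ℝ))⁻¹ * S (tri n)) atTop (𝓝 μ) := h1.comp htri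
  have hc : Tendsto (fun n : ℕ => (1 - (n:ℝ)⁻¹) * ((tri n : ℝ)⁻¹ * S (tri n))
      + (n:ℝ)⁻¹ * ((n:ℝ)⁻¹ * D n)) atTop (𝓝 ((1 - 0) * μ + 0 * μ)) :=
    ((tendsto_const_nhds.sub hn0).mul ha).add (hn0.mul h2)
  have hlim : ((1:ℝ) - 0) * μ + 0 * μ = μ := by ring
  rw [hlim] at hc
  apply Tendsto.congr' _ hc
  filter_upwards [eventually_ge_atTop 2] with n hn
  have hnR : (0:ℝ) < (n:ℝ) := by exact_mod_cast (by omega : 0 < n)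
  have htpos : 0 < tri n := by
    have h1 := tri_mono hn
    have h2 : tri 2 = 1 := by decide
    omega
  have htR : (0:ℝ) < (tri n : ℝ) := by exact_mod_cast htpos
  have ht2 : (tri n : ℝ) * 2 = (n:ℝ)^2 - (n:ℝ) := by
    have hnat : (tri n) * 2 = n * (n - 1) := Finset.sum_range_id_mul_two n
    have hcast : ((tri n * 2 : ℕ) : ℝ) = ((n * (n - 1) : ℕ) : ℝ) := by exact_mod_cast hnat
    push_cast [Nat.cast_sub (by omega : 1 ≤ n)] at hcast
    nlinarith [hcast]
  have hfrac : (1:ℝ) - (n:ℝ)⁻¹ = 2 * (tri n : ℝ) / (n:ℝ)^2 := by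
    field_simp
    nlinarith [ht2]
  simp only [key n, hfrac]
  field_simp

end SLLN


section Moments

variable {Ω : Type*} [MeasurableSpace Ω] {P : Measure Ω} [IsProbabilityMeasure P]
  {U : ℕ → ℕ → Ω → ℝ} {L : Measure ℝ} [IsProbabilityMeasure L]

/-- canonical edge -/
def ce (i j : ℕ) : {q : ℕ × ℕ // q.1 ≤ q.2} :=
  if h : i ≤ j then ⟨(i, j), h⟩ else ⟨(j, i), le_of_not_ge h⟩

lemma ce_eq_iff {i j i' j' : ℕ} :
    ce i j = ce i' j' ↔ (i = i' ∧ j = j') ∨ (i = j' ∧ j = i') := by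
  unfold ce
  split_ifs <;> simp [Subtype.ext_iff, Prod.ext_iff] <;> omega

lemma ce_ne_of_ne {i j k : ℕ} (h : j ≠ k) : ce i j ≠ ce i k := by
  rw [Ne, ce_eq_iff]
  omega

/-- centered variable indexed by canonical edges -/
def Vc (U : ℕ → ℕ → Ω → ℝ) (p : {q : ℕ × ℕ // q.1 ≤ q.2}) : Ω → ℝ :=
  fun ω => U p.1.1 p.1.2 ω - 1

lemma Vc_eq (hsymm : ∀ i j, U i j = U j i) (i j : ℕ) :
    (fun ω => U i j ω - 1) = Vc U (ce i j) := by
  unfold Vc ce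
  split_ifs with h
  · rfl
  · funext ω
    rw [hsymm i j]

section helpers

variable (hmeas : ∀ i j, Measurable (U i j))
  (hdist : ∀ i j, Measure.map (U i j) P = L)
  (hindep : iIndepFun
      (fun p : {q : ℕ × ℕ // q.1 ≤ q.2} => U p.1.1 p.1.2) P)
  (hL1 : Integrable (fun x => x) L)
  (hmean : ∫ x, x ∂L = 1)
  (hL2 : Integrable (fun x => x^2) L)

include hmeas hdist in
lemma integrable_comp_U {g : ℝ → ℝ} (hg : Measurable g) (hgi : Integrable g L) (i j : ℕ) :
    Integrable (fun ω => g (U i j ω)) P := by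
  have h0 : Integrable g (Measure.map (U i j) P) := by rw [hdist]; exact hgi
  exact (integrable_map_measure hg.aestronglyMeasurable (hmeas _ _).aemeasurable).mp h0

include hmeas hdist in
lemma integral_comp_U {g : ℝ → ℝ} (hg : Measurable g) (i j : ℕ) :
    ∫ ω, g (U i j ω) ∂P = ∫ x, g x ∂L := by
  rw [← hdist i j, integral_map (hmeas _ _).aemeasurable hg.aestronglyMeasurable]

include hL1 hL2 in
lemma integrable_g2 : Integrable (fun x : ℝ => (x - 1)^2) L := by
  have heq : (fun x : ℝ => (x - 1)^2) = fun x => x^2 - 2 * x + 1 := by funext x; ring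
  rw [heq]
  exact (hL2.sub (hL1.const_mul 2)).add (integrable_const 1)

lemma Vc_meas (p : {q : ℕ × ℕ // q.1 ≤ q.2}) (hmeas : ∀ i j, Measurable (U i j)) :
    Measurable (Vc U p) := (hmeas _ _).sub measurable_const

include hindep hmeas in
lemma Vc_indep : iIndepFun (Vc U) P := by
  have h := hindep.comp (fun _ (x : ℝ) => x - 1) (fun _ => measurable_id.sub measurable_const)
  exact h

include hmeas hdist hL1 in
lemma Vc_integrable (p : {q : ℕ × ℕ // q.1 ≤ q.2}) : Integrable (Vc U p) P :=
  integrable_comp_U hmeas hdist (measurable_id.sub measurable_const)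
    (hL1.sub (integrable_const 1)) _ _

include hmeas hdist hL1 hmean in
lemma Vc_integral (p : {q : ℕ × ℕ // q.1 ≤ q.2}) : ∫ ω, Vc U p ω ∂P = 0 := by
  have h := integral_comp_U hmeas hdist (g := fun x => x - 1)
    (measurable_id.sub measurable_const) p.1.1 p.1.2
  rw [show Vc U p = fun ω => U p.1.1 p.1.2 ω - 1 from rfl, h,
    integral_sub hL1 (integrable_const 1), hmean]
  simp

include hmeas hdist hL1 hL2 in
lemma Vc_sq_integrable (p : {q : ℕ × ℕ // q.1 ≤ q.2}) :
    Integrable (fun ω => Vc U p ω ^ 2) P :=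
  integrable_comp_U hmeas hdist ((measurable_id.sub measurable_const).pow_const 2)
    (integrable_g2 hL1 hL2) _ _

include hmeas hdist in
lemma Vc_sq_integral (p : {q : ℕ × ℕ // q.1 ≤ q.2}) :
    ∫ ω, Vc U p ω ^ 2 ∂P = ∫ x, (x - 1)^2 ∂L :=
  integral_comp_U hmeas hdist (g := fun x => (x - 1)^2)
    ((measurable_id.sub measurable_const).pow_const 2) p.1.1 p.1.2

include hmeas hindep in
lemma indepV_one_two {p q r : {q : ℕ × ℕ // q.1 ≤ q.2}} (hpq : q ≠ p) (hpr : r ≠ p) :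
    IndepFun (Vc U p) (fun ω => Vc U q ω * Vc U r ω) P := by
  classical
  have hVmeas : ∀ s, Measurable (Vc U s) := fun s => Vc_meas s hmeas
  have hdisj : Disjoint ({p} : Finset _) {q, r} := by
    rw [Finset.disjoint_singleton_left]
    simp only [Finset.mem_insert, Finset.mem_singleton]
    rintro (rfl | rfl)
    exacts [hpq rfl, hpr rfl]
  have h := (Vc_indep hmeas hindep).indepFun_finset {p} {q, r} hdisj hVmeas
  exact h.comp (φ := fun t : (({p} : Finset _) → ℝ) => t ⟨p, Finset.mem_singleton_self p⟩)
    (ψ := fun t : ((({q, r} : Finset _)) → ℝ) =>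
      t ⟨q, Finset.mem_insert_self q {r}⟩ *
      t ⟨r, Finset.mem_insert_of_mem (Finset.mem_singleton_self r)⟩)
    (measurable_pi_apply _) ((measurable_pi_apply _).mul (measurable_pi_apply _))

include hmeas hindep in
lemma indepV_one_three {p q r s : {q : ℕ × ℕ // q.1 ≤ q.2}}
    (hpq : q ≠ p) (hpr : r ≠ p) (hps : s ≠ p) :
    IndepFun (Vc U p) (fun ω => Vc U q ω * (Vc U r ω * Vc U s ω)) P := by
  classical
  have hVmeas : ∀ s, Measurable (Vc U s) := fun s => Vc_meas s hmeas
  have hdisj : Disjoint ({p} : Finset _) {q, r, s} := by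
    rw [Finset.disjoint_singleton_left]
    simp only [Finset.mem_insert, Finset.mem_singleton]
    rintro (rfl | rfl | rfl)
    exacts [hpq rfl, hpr rfl, hps rfl]
  have h := (Vc_indep hmeas hindep).indepFun_finset {p} {q, r, s} hdisj hVmeas
  exact h.comp (φ := fun t : (({p} : Finset _) → ℝ) => t ⟨p, Finset.mem_singleton_self p⟩)
    (ψ := fun t : ((({q, r, s} : Finset _)) → ℝ) =>
      t ⟨q, Finset.mem_insert_self q {r, s}⟩ *
      (t ⟨r, Finset.mem_insert_of_mem (Finset.mem_insert_self r {s})⟩ *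
       t ⟨s, Finset.mem_insert_of_mem (Finset.mem_insert_of_mem (Finset.mem_singleton_self s))⟩))
    (measurable_pi_apply _) ((measurable_pi_apply _).mul
      ((measurable_pi_apply _).mul (measurable_pi_apply _)))

include hmeas hdist hindep hL1 hmean hL2 in
lemma lonely_case {a b c d : {q : ℕ × ℕ // q.1 ≤ q.2}}
    (hab : b ≠ a) (hac : c ≠ a) (had : d ≠ a) (hcd : c ≠ d) :
    Integrable (fun ω => Vc U a ω * (Vc U b ω * (Vc U c ω * Vc U d ω))) P ∧
    ∫ ω, Vc U a ω * (Vc U b ω * (Vc U c ω * Vc U d ω)) ∂P = 0 := by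
  have hVindep := Vc_indep hmeas hindep
  have intV : ∀ p, Integrable (Vc U p) P := Vc_integrable hmeas hdist hL1
  have intVsq : ∀ p, Integrable (fun ω => Vc U p ω ^ 2) P :=
    Vc_sq_integrable hmeas hdist hL1 hL2
  have hWint : Integrable (fun ω => Vc U b ω * (Vc U c ω * Vc U d ω)) P := by
    by_cases hbc : b = c
    · subst hbc
      have heq : (fun ω => Vc U b ω * (Vc U b ω * Vc U d ω))
          = fun ω => Vc U b ω ^ 2 * Vc U d ω := by funext ω; ring
      rw [heq]
      have hind : IndepFun (fun ω => Vc U b ω ^ 2) (Vc U d) P :=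
        (hVindep.indepFun (fun h => hcd h)).comp (measurable_id.pow_const 2) measurable_id
      exact hind.integrable_mul (intVsq b) (intV d)
    · by_cases hbd : b = d
      · subst hbd
        have heq : (fun ω => Vc U b ω * (Vc U c ω * Vc U b ω))
            = fun ω => Vc U b ω ^ 2 * Vc U c ω := by funext ω; ring
        rw [heq]
        have hind : IndepFun (fun ω => Vc U b ω ^ 2) (Vc U c) P :=
          (hVindep.indepFun (fun h => hcd h.symm)).comp
            (measurable_id.pow_const 2) measurable_id
        exact hind.integrable_mul (intVsq b) (intV c)
      · have hind := indepV_one_two hmeas hindep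
          (p := b) (q := c) (r := d) (fun h => hbc h.symm) (fun h => hbd h.symm)
        have hint2 : Integrable (fun ω => Vc U c ω * Vc U d ω) P :=
          (hVindep.indepFun hcd).integrable_mul (intV c) (intV d)
        exact hind.integrable_mul (intV b) hint2
  have hind3 := indepV_one_three hmeas hindep (p := a) (q := b) (r := c) (s := d) hab hac had
  constructor
  · exact hind3.integrable_mul (intV a) hWint
  · have h := hind3.integral_mul_eq_mul_integral (intV a).aestronglyMeasurable hWint.aestronglyMeasurable
    rw [show ((fun ω => Vc U a ω) * fun ω => Vc U b ω * (Vc U c ω * Vc U d ω))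
        = fun ω => Vc U a ω * (Vc U b ω * (Vc U c ω * Vc U d ω)) from rfl] at h
    rw [h, Vc_integral hmeas hdist hL1 hmean, zero_mul]

include hmeas hdist hindep hL1 hmean hL2 in
lemma term_le (p q r s : {q : ℕ × ℕ // q.1 ≤ q.2}) (hpq : p ≠ q) (hrs : r ≠ s) :
    Integrable (fun ω => Vc U p ω * Vc U q ω * (Vc U r ω * Vc U s ω)) P ∧
    ∫ ω, Vc U p ω * Vc U q ω * (Vc U r ω * Vc U s ω) ∂P
      ≤ (if (p = r ∧ q = s) ∨ (p = s ∧ q = r) then (∫ x, (x - 1)^2 ∂L)^2 else 0) := by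
  classical
  have hVindep := Vc_indep hmeas hindep
  have intVsq := Vc_sq_integrable hmeas hdist hL1 hL2 (U := U)
  by_cases hm : (p = r ∧ q = s) ∨ (p = s ∧ q = r)
  · rw [if_pos hm]
    have heq : (fun ω => Vc U p ω * Vc U q ω * (Vc U r ω * Vc U s ω))
        = fun ω => Vc U p ω ^ 2 * Vc U q ω ^ 2 := by
      rcases hm with ⟨rfl, rfl⟩ | ⟨rfl, rfl⟩ <;> (funext ω; ring)
    rw [heq]
    have hind : IndepFun (fun ω => Vc U p ω ^ 2) (fun ω => Vc U q ω ^ 2) P :=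
      (hVindep.indepFun hpq).comp (measurable_id.pow_const 2) (measurable_id.pow_const 2)
    refine ⟨hind.integrable_mul (intVsq p) (intVsq q), le_of_eq ?_⟩
    have h := hind.integral_mul_eq_mul_integral (intVsq p).aestronglyMeasurable (intVsq q).aestronglyMeasurable
    rw [show ((fun ω => Vc U p ω ^ 2) * fun ω => Vc U q ω ^ 2)
        = fun ω => Vc U p ω ^ 2 * Vc U q ω ^ 2 from rfl] at h
    rw [h, Vc_sq_integral hmeas hdist, Vc_sq_integral hmeas hdist, sq]
  · rw [if_neg hm]
    by_cases h1 : p ≠ r ∧ p ≠ s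
    · have heq : (fun ω => Vc U p ω * Vc U q ω * (Vc U r ω * Vc U s ω))
          = fun ω => Vc U p ω * (Vc U q ω * (Vc U r ω * Vc U s ω)) := by funext ω; ring
      rw [heq]
      have h := lonely_case hmeas hdist hindep hL1 hmean hL2
        (a := p) (b := q) (c := r) (d := s) (Ne.symm hpq)
        (fun h => h1.1 h.symm) (fun h => h1.2 h.symm) hrs
      exact ⟨h.1, le_of_eq h.2⟩
    · have hq : q ≠ p ∧ q ≠ r ∧ q ≠ s := by
        rcases not_and_or.mp h1 with h | h
        · have hpr : p = r := not_not.mp h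
          exact ⟨Ne.symm hpq, fun hqr => hpq (hpr.trans hqr.symm),
            fun hqs => hm (Or.inl ⟨hpr, hqs⟩)⟩
        · have hps : p = s := not_not.mp h
          exact ⟨Ne.symm hpq, fun hqr => hm (Or.inr ⟨hps, hqr⟩),
            fun hqs => hpq (hps.trans hqs.symm)⟩
      have heq : (fun ω => Vc U p ω * Vc U q ω * (Vc U r ω * Vc U s ω))
          = fun ω => Vc U q ω * (Vc U p ω * (Vc U r ω * Vc U s ω)) := by funext ω; ring
      rw [heq]
      have h := lonely_case hmeas hdist hindep hL1 hmean hL2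
        (a := q) (b := p) (c := r) (d := s) hpq
        (Ne.symm hq.2.1) (Ne.symm hq.2.2) hrs
      exact ⟨h.1, le_of_eq h.2⟩

end helpers

/-- degenerate quadratic part -/
def QT (U : ℕ → ℕ → Ω → ℝ) (n : ℕ) (ω : Ω) : ℝ :=
  ∑ t ∈ Finset.range n ×ˢ Finset.range n ×ˢ Finset.range n,
    if t.2.1 = t.2.2 then 0 else Vc U (ce t.1 t.2.1) ω * Vc U (ce t.1 t.2.2) ω

lemma QT_meas (hmeas : ∀ i j, Measurable (U i j)) (n : ℕ) :
    Measurable (fun ω => QT U n ω) := by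
  apply Finset.measurable_sum
  intro t _
  split_ifs
  · exact measurable_const
  · exact (Vc_meas _ hmeas).mul (Vc_meas _ hmeas)

lemma matched_card_le (n : ℕ) (i j k : ℕ) :
    (((Finset.range n ×ˢ Finset.range n ×ˢ Finset.range n)).filter
      (fun t2 : ℕ × ℕ × ℕ =>
        (ce i j = ce t2.1 t2.2.1 ∧ ce i k = ce t2.1 t2.2.2) ∨
        (ce i j = ce t2.1 t2.2.2 ∧ ce i k = ce t2.1 t2.2.1))).card ≤ 27 := by
  classical
  have hsub : (((Finset.range n ×ˢ Finset.range n ×ˢ Finset.range n)).filter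
      (fun t2 : ℕ × ℕ × ℕ =>
        (ce i j = ce t2.1 t2.2.1 ∧ ce i k = ce t2.1 t2.2.2) ∨
        (ce i j = ce t2.1 t2.2.2 ∧ ce i k = ce t2.1 t2.2.1)))
      ⊆ ({i, j, k} : Finset ℕ) ×ˢ ({i, j, k} : Finset ℕ) ×ˢ ({i, j, k} : Finset ℕ) := by
    rintro ⟨i', j', k'⟩ ht
    simp only [Finset.mem_filter] at ht
    have hmt := ht.2
    simp only [Finset.mem_product, Finset.mem_insert, Finset.mem_singleton]
    rcases hmt with ⟨h1, h2⟩ | ⟨h1, h2⟩ <;> rw [ce_eq_iff] at h1 h2 <;>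
      refine ⟨?_, ?_, ?_⟩ <;> omega
  have hcard := Finset.card_le_card hsub
  have h3 : ({i, j, k} : Finset ℕ).card ≤ 3 := by
    have h1 := Finset.card_insert_le i ({j, k} : Finset ℕ)
    have h2 := Finset.card_insert_le j ({k} : Finset ℕ)
    simp only [Finset.card_singleton] at h1 h2
    omega
  rw [Finset.card_product, Finset.card_product] at hcard
  calc _ ≤ ({i,j,k} : Finset ℕ).card * (({i,j,k} : Finset ℕ).card * ({i,j,k} : Finset ℕ).card) :=
        hcard
    _ ≤ 27 := by nlinarith

section helpers2

variable (hmeas : ∀ i j, Measurable (U i j))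
  (hdist : ∀ i j, Measure.map (U i j) P = L)
  (hindep : iIndepFun
      (fun p : {q : ℕ × ℕ // q.1 ≤ q.2} => U p.1.1 p.1.2) P)
  (hL1 : Integrable (fun x => x) L)
  (hmean : ∫ x, x ∂L = 1)
  (hL2 : Integrable (fun x => x^2) L)

include hmeas hdist hindep hL1 hmean hL2 in
lemma QT_sq_bound (n : ℕ) :
    Integrable (fun ω => QT U n ω ^ 2) P ∧
    ∫ ω, QT U n ω ^ 2 ∂P ≤ 27 * (∫ x, (x - 1)^2 ∂L)^2 * (n : ℝ)^3 := by
  classical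
  set σ2 := ∫ x, (x - 1)^2 ∂L with hσ2
  have hσ2nn : 0 ≤ σ2 := integral_nonneg (fun x => sq_nonneg _)
  set s := Finset.range n ×ˢ Finset.range n ×ˢ Finset.range n with hs
  have hexp : (fun ω => QT U n ω ^ 2)
      = fun ω => ∑ t1 ∈ s, ∑ t2 ∈ s,
          ((if t1.2.1 = t1.2.2 then 0 else Vc U (ce t1.1 t1.2.1) ω * Vc U (ce t1.1 t1.2.2) ω) *
           (if t2.2.1 = t2.2.2 then 0 else Vc U (ce t2.1 t2.2.1) ω * Vc U (ce t2.1 t2.2.2) ω)) := by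
    funext ω
    rw [sq, QT, Finset.sum_mul_sum]
  have hterm : ∀ t1 : ℕ × ℕ × ℕ, ∀ t2 : ℕ × ℕ × ℕ,
      Integrable (fun ω =>
        ((if t1.2.1 = t1.2.2 then 0 else Vc U (ce t1.1 t1.2.1) ω * Vc U (ce t1.1 t1.2.2) ω) *
         (if t2.2.1 = t2.2.2 then 0 else Vc U (ce t2.1 t2.2.1) ω * Vc U (ce t2.1 t2.2.2) ω))) P ∧
      ∫ ω, ((if t1.2.1 = t1.2.2 then 0 else Vc U (ce t1.1 t1.2.1) ω * Vc U (ce t1.1 t1.2.2) ω) *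
         (if t2.2.1 = t2.2.2 then 0 else Vc U (ce t2.1 t2.2.1) ω * Vc U (ce t2.1 t2.2.2) ω)) ∂P
        ≤ (if (ce t1.1 t1.2.1 = ce t2.1 t2.2.1 ∧ ce t1.1 t1.2.2 = ce t2.1 t2.2.2) ∨
              (ce t1.1 t1.2.1 = ce t2.1 t2.2.2 ∧ ce t1.1 t1.2.2 = ce t2.1 t2.2.1)
           then σ2^2 else 0) := by
    intro t1 t2
    by_cases h1 : t1.2.1 = t1.2.2
    · simp only [if_pos h1, zero_mul]
      refine ⟨integrable_zero _ _ _, ?_⟩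
      rw [integral_zero]
      split_ifs
      · positivity
      · exact le_refl _
    · by_cases h2 : t2.2.1 = t2.2.2
      · simp only [if_pos h2, mul_zero]
        refine ⟨integrable_zero _ _ _, ?_⟩
        rw [integral_zero]
        split_ifs
        · positivity
        · exact le_refl _
      · simp only [if_neg h1, if_neg h2]
        exact term_le hmeas hdist hindep hL1 hmean hL2 _ _ _ _
          (ce_ne_of_ne h1) (ce_ne_of_ne h2)
  have hint : Integrable (fun ω => QT U n ω ^ 2) P := by
    rw [hexp]
    exact integrable_finset_sum s (fun t1 _ =>
      integrable_finset_sum s (fun t2 _ => (hterm t1 t2).1))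
  refine ⟨hint, ?_⟩
  have hIeq : ∫ ω, QT U n ω ^ 2 ∂P
      = ∑ t1 ∈ s, ∑ t2 ∈ s, ∫ ω,
          ((if t1.2.1 = t1.2.2 then 0 else Vc U (ce t1.1 t1.2.1) ω * Vc U (ce t1.1 t1.2.2) ω) *
           (if t2.2.1 = t2.2.2 then 0 else Vc U (ce t2.1 t2.2.1) ω * Vc U (ce t2.1 t2.2.2) ω)) ∂P := by
    rw [hexp, integral_finset_sum s (fun t1 _ =>
      integrable_finset_sum s (fun t2 _ => (hterm t1 t2).1))]
    exact Finset.sum_congr rfl (fun t1 _ =>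
      integral_finset_sum s (fun t2 _ => (hterm t1 t2).1))
  rw [hIeq]
  have hstep1 : ∑ t1 ∈ s, ∑ t2 ∈ s, ∫ ω,
          ((if t1.2.1 = t1.2.2 then 0 else Vc U (ce t1.1 t1.2.1) ω * Vc U (ce t1.1 t1.2.2) ω) *
           (if t2.2.1 = t2.2.2 then 0 else Vc U (ce t2.1 t2.2.1) ω * Vc U (ce t2.1 t2.2.2) ω)) ∂P
      ≤ ∑ t1 ∈ s, ∑ t2 ∈ s,
          (if (ce t1.1 t1.2.1 = ce t2.1 t2.2.1 ∧ ce t1.1 t1.2.2 = ce t2.1 t2.2.2) ∨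
              (ce t1.1 t1.2.1 = ce t2.1 t2.2.2 ∧ ce t1.1 t1.2.2 = ce t2.1 t2.2.1)
           then σ2^2 else 0) :=
    Finset.sum_le_sum (fun t1 _ => Finset.sum_le_sum (fun t2 _ => (hterm t1 t2).2))
  refine hstep1.trans ?_
  have hstep2 : ∀ t1 : ℕ × ℕ × ℕ, ∑ t2 ∈ s,
          (if (ce t1.1 t1.2.1 = ce t2.1 t2.2.1 ∧ ce t1.1 t1.2.2 = ce t2.1 t2.2.2) ∨
              (ce t1.1 t1.2.1 = ce t2.1 t2.2.2 ∧ ce t1.1 t1.2.2 = ce t2.1 t2.2.1)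
           then σ2^2 else 0) ≤ 27 * σ2^2 := by
    intro t1
    rw [← Finset.sum_filter, Finset.sum_const, nsmul_eq_mul]
    have hc := matched_card_le n t1.1 t1.2.1 t1.2.2
    apply mul_le_mul_of_nonneg_right _ (by positivity)
    exact_mod_cast hc
  refine le_trans (Finset.sum_le_sum (fun t1 _ => hstep2 t1)) ?_
  rw [Finset.sum_const, nsmul_eq_mul, hs, Finset.card_product, Finset.card_product,
    Finset.card_range]
  apply le_of_eq
  push_cast
  ring

end helpers2

end Moments


section BC

variable {Ω : Type*} [MeasurableSpace Ω] {P : Measure Ω} [IsProbabilityMeasure P]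
  {U : ℕ → ℕ → Ω → ℝ} {L : Measure ℝ} [IsProbabilityMeasure L]

lemma QT_tendsto (hmeas : ∀ i j, Measurable (U i j))
    (hdist : ∀ i j, Measure.map (U i j) P = L)
    (hindep : iIndepFun
      (fun p : {q : ℕ × ℕ // q.1 ≤ q.2} => U p.1.1 p.1.2) P)
    (hL1 : Integrable (fun x => x) L)
    (hmean : ∫ x, x ∂L = 1)
    (hL2 : Integrable (fun x => x^2) L) :
    ∀ᵐ ω ∂P, Tendsto (fun n : ℕ => (((n : ℝ))^3)⁻¹ * QT U n ω) atTop (𝓝 0) := by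
  classical
  set σ2 := ∫ x, (x - 1)^2 ∂L with hσ2
  have hσ2nn : 0 ≤ σ2 := integral_nonneg fun x => sq_nonneg _
  set F : ℕ → Ω → ENNReal := fun n ω => ENNReal.ofReal (((((n : ℝ))^3)⁻¹ * QT U n ω)^2) with hF
  have hFmeas : ∀ n, Measurable (F n) := fun n =>
    (((QT_meas hmeas n).const_mul _).pow_const 2).ennreal_ofReal
  have hFint : ∀ n : ℕ, ∫⁻ ω, F n ω ∂P ≤ ENNReal.ofReal (27 * σ2^2 * (((n : ℝ))^3)⁻¹) := by
    intro n
    have hb := QT_sq_bound hmeas hdist hindep hL1 hmean hL2 (n := n)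
    have hint2 : Integrable (fun ω => ((((n : ℝ))^3)⁻¹ * QT U n ω)^2) P := by
      have heq : (fun ω => ((((n : ℝ))^3)⁻¹ * QT U n ω)^2)
          = fun ω => ((((n : ℝ))^3)⁻¹)^2 * (QT U n ω)^2 := by funext ω; ring
      rw [heq]
      exact hb.1.const_mul _
    rw [hF]
    simp only
    rw [← ofReal_integral_eq_lintegral_ofReal hint2
      (Filter.Eventually.of_forall fun ω => sq_nonneg _)]
    apply ENNReal.ofReal_le_ofReal
    have heq2 : ∫ ω, ((((n : ℝ))^3)⁻¹ * QT U n ω)^2 ∂P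
        = ((((n : ℝ))^3)⁻¹)^2 * ∫ ω, QT U n ω ^ 2 ∂P := by
      rw [← integral_const_mul]
      congr 1
      funext ω
      ring
    rw [heq2]
    by_cases hn : n = 0
    · subst hn; simp
    · have hnpos : (0:ℝ) < (n : ℝ) := by exact_mod_cast Nat.pos_of_ne_zero hn
      calc ((((n : ℝ))^3)⁻¹)^2 * ∫ ω, QT U n ω ^ 2 ∂P
          ≤ ((((n : ℝ))^3)⁻¹)^2 * (27 * σ2^2 * (n : ℝ)^3) :=
            mul_le_mul_of_nonneg_left hb.2 (by positivity)
        _ = 27 * σ2^2 * (((n : ℝ))^3)⁻¹ := by field_simp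
  have hsummable : Summable (fun n : ℕ => 27 * σ2^2 * (((n : ℝ))^3)⁻¹) :=
    (Real.summable_nat_pow_inv.mpr (by omega)).mul_left _
  have hsum : ∑' n : ℕ, ∫⁻ ω, F n ω ∂P ≠ ⊤ := by
    apply ne_of_lt
    calc ∑' n : ℕ, ∫⁻ ω, F n ω ∂P
        ≤ ∑' n : ℕ, ENNReal.ofReal (27 * σ2^2 * (((n : ℝ))^3)⁻¹) := ENNReal.tsum_le_tsum hFint
      _ < ⊤ := by
          rw [← ENNReal.ofReal_tsum_of_nonneg (fun n => by positivity) hsummable]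
          exact ENNReal.ofReal_lt_top
  have hswap : ∫⁻ ω, ∑' n, F n ω ∂P = ∑' n, ∫⁻ ω, F n ω ∂P :=
    lintegral_tsum (fun n => (hFmeas n).aemeasurable)
  have hfin : ∀ᵐ ω ∂P, ∑' n, F n ω ≠ ⊤ := by
    have h := ae_lt_top (Measurable.ennreal_tsum hFmeas) (by rw [hswap]; exact hsum)
    filter_upwards [h] with ω hω
    exact hω.ne
  filter_upwards [hfin] with ω hω
  have h0 : Tendsto (fun n => F n ω) atTop (𝓝 0) :=
    ENNReal.tendsto_atTop_zero_of_tsum_ne_top hω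
  have h1 : Tendsto (fun n => (F n ω).toReal) atTop (𝓝 0) := by
    have h := (ENNReal.tendsto_toReal (a := 0) (by simp)).comp h0
    exact h
  have h2 : Tendsto (fun n : ℕ => ((((n : ℝ))^3)⁻¹ * QT U n ω)^2) atTop (𝓝 0) := by
    apply h1.congr
    intro n
    rw [hF]
    simp only
    rw [ENNReal.toReal_ofReal (sq_nonneg _)]
  have h3 : Tendsto (fun n : ℕ => |(((n : ℝ))^3)⁻¹ * QT U n ω|) atTop (𝓝 0) := by
    have h := (Real.continuous_sqrt.tendsto 0).comp h2
    simp only [Real.sqrt_zero] at h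
    apply h.congr
    intro n
    simp only [Function.comp_apply]
    rw [Real.sqrt_sq_eq_abs]
  exact (tendsto_zero_iff_abs_tendsto_zero _).mpr h3

end BC

section Assembly

variable {Ω : Type*} [MeasurableSpace Ω] {P : Measure Ω} [IsProbabilityMeasure P]
  {U : ℕ → ℕ → Ω → ℝ} {L : Measure ℝ} [IsProbabilityMeasure L]

lemma rho_identity (hsymm : ∀ i j, U i j = U j i) (n : ℕ) (ω : Ω) :
    ∑ i ∈ Finset.range n, ((∑ j ∈ Finset.range n, U i j ω) - n)^2
      = (∑ i ∈ Finset.range n, ∑ j ∈ Finset.range n, (U i j ω - 1)^2) + QT U n ω := by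
  classical
  have hZ : ∀ i j, Vc U (ce i j) ω = U i j ω - 1 :=
    fun i j => (congrFun (Vc_eq hsymm i j) ω).symm
  have hQT : QT U n ω = ∑ i ∈ Finset.range n, ∑ j ∈ Finset.range n, ∑ k ∈ Finset.range n,
      (if j = k then 0 else (U i j ω - 1) * (U i k ω - 1)) := by
    rw [QT, Finset.sum_product]
    apply Finset.sum_congr rfl; intro i _
    rw [Finset.sum_product]
    apply Finset.sum_congr rfl; intro j _
    apply Finset.sum_congr rfl; intro k _
    simp only [hZ]
  rw [hQT, ← Finset.sum_add_distrib]
  apply Finset.sum_congr rfl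
  intro i _
  have hrow : (∑ j ∈ Finset.range n, U i j ω) - n
      = ∑ j ∈ Finset.range n, (U i j ω - 1) := by
    rw [Finset.sum_sub_distrib, Finset.sum_const, Finset.card_range, nsmul_eq_mul, mul_one]
  rw [hrow, sq, Finset.sum_mul_sum, ← Finset.sum_add_distrib]
  apply Finset.sum_congr rfl
  intro j hj
  have hsplit : ∑ k ∈ Finset.range n, (if j = k then 0 else (U i j ω - 1) * (U i k ω - 1))
      = ∑ k ∈ Finset.range n, ((U i j ω - 1) * (U i k ω - 1)
          - if j = k then (U i j ω - 1) * (U i k ω - 1) else 0) := by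
    apply Finset.sum_congr rfl
    intro k _
    split_ifs <;> simp
  rw [hsplit, Finset.sum_sub_distrib, Finset.sum_ite_eq, if_pos hj]
  ring

lemma det_bound (n : ℕ) (hn : 1 ≤ n) (ρ : ℕ → ℝ) (hρ : ∀ i, 0 ≤ ρ i)
    (hS : 0 < ∑ j ∈ Finset.range n, ρ j) :
    (1/2 : ℝ) * ∑ i ∈ Finset.range n, |ρ i / (∑ j ∈ Finset.range n, ρ j) - 1/n|
      ≤ (1/2) * |1 - (∑ j ∈ Finset.range n, ρ j) / (n:ℝ)^2|
        + (1/2) * Real.sqrt (((n:ℝ)^3)⁻¹ * ∑ i ∈ Finset.range n, (ρ i - n)^2) := by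
  set S := ∑ j ∈ Finset.range n, ρ j with hSdef
  have hnR : (0:ℝ) < (n:ℝ) := by exact_mod_cast hn
  have hSne : S ≠ 0 := ne_of_gt hS
  have h1 : ∑ i ∈ Finset.range n, |ρ i / S - 1/n|
      ≤ ∑ i ∈ Finset.range n, (ρ i * |S⁻¹ - ((n:ℝ)^2)⁻¹| + |ρ i - n| / (n:ℝ)^2) := by
    apply Finset.sum_le_sum
    intro i _
    have hid : ρ i / S - 1/(n:ℝ) = (ρ i * (S⁻¹ - ((n:ℝ)^2)⁻¹)) + (ρ i - n) / (n:ℝ)^2 := by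
      field_simp
      ring
    rw [hid]
    refine (abs_add_le _ _).trans ?_
    rw [abs_mul, abs_of_nonneg (hρ i), abs_div,
      abs_of_pos (by positivity : (0:ℝ) < (n:ℝ)^2)]
  rw [Finset.sum_add_distrib, ← Finset.sum_mul, ← Finset.sum_div] at h1
  have h3 : S * |S⁻¹ - ((n:ℝ)^2)⁻¹| = |1 - S / (n:ℝ)^2| := by
    rw [show (1 - S / (n:ℝ)^2) = S * (S⁻¹ - ((n:ℝ)^2)⁻¹) by
      rw [mul_sub, mul_inv_cancel₀ hSne, div_eq_mul_inv]]
    rw [abs_mul, abs_of_pos hS]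
  have h4 : (∑ i ∈ Finset.range n, |ρ i - (n:ℝ)|)^2
      ≤ (n:ℝ) * ∑ i ∈ Finset.range n, (ρ i - n)^2 := by
    have hcs := sq_sum_le_card_mul_sum_sq (s := Finset.range n)
      (f := fun i => |ρ i - (n:ℝ)|)
    simp only [Finset.card_range, sq_abs] at hcs
    exact_mod_cast hcs
  have h5 : ∑ i ∈ Finset.range n, |ρ i - (n:ℝ)|
      ≤ Real.sqrt ((n:ℝ) * ∑ i ∈ Finset.range n, (ρ i - n)^2) := by
    rw [← Real.sqrt_sq (Finset.sum_nonneg (fun i _ => abs_nonneg _))]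
    exact Real.sqrt_le_sqrt h4
  have h6 : Real.sqrt (((n:ℝ)^3)⁻¹ * ∑ i ∈ Finset.range n, (ρ i - n)^2)
      = Real.sqrt ((n:ℝ) * ∑ i ∈ Finset.range n, (ρ i - n)^2) / (n:ℝ)^2 := by
    rw [show (((n:ℝ))^3)⁻¹ * ∑ i ∈ Finset.range n, (ρ i - n)^2
        = (((n:ℝ)^2)⁻¹)^2 * ((n:ℝ) * ∑ i ∈ Finset.range n, (ρ i - n)^2) by
      field_simp]
    rw [Real.sqrt_mul (show (0:ℝ) ≤ (((n:ℝ)^2)⁻¹)^2 by positivity)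
        ((n:ℝ) * ∑ i ∈ Finset.range n, (ρ i - n)^2),
      Real.sqrt_sq (show (0:ℝ) ≤ ((n:ℝ)^2)⁻¹ by positivity), div_eq_mul_inv, mul_comm]
  have h7 : (∑ i ∈ Finset.range n, |ρ i - (n:ℝ)|) / (n:ℝ)^2
      ≤ Real.sqrt (((n:ℝ)^3)⁻¹ * ∑ i ∈ Finset.range n, (ρ i - n)^2) := by
    rw [h6]
    exact div_le_div_of_nonneg_right h5 (by positivity)
  linarith [h1, h3, h7]

end Assembly

end CGIMaux

/-- **Invariant probability measure (Proposition 1.5).** If `L` has mean `1` and finite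
second moment, then almost surely the total variation distance
`‖ρ̂ − U_n‖_TV = (1/2)·∑_i |ρ_i/(ρ_1+⋯+ρ_n) − 1/n|` between the normalized invariant
measure `ρ̂` of `K` and the uniform law on `{1,…,n}` tends to `0` as `n → ∞`. -/
theorem complete_graph_invariant_measure_tv
    {Ω : Type*} [MeasurableSpace Ω] (P : Measure Ω) [IsProbabilityMeasure P]
    (U : ℕ → ℕ → Ω → ℝ) (L : Measure ℝ) [IsProbabilityMeasure L]
    (hmeas : ∀ i j, Measurable (U i j))
    (hsymm : ∀ i j, U i j = U j i)
    (hdist : ∀ i j, Measure.map (U i j) P = L)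
    (hindep : iIndepFun
      (fun p : {q : ℕ × ℕ // q.1 ≤ q.2} => U p.1.1 p.1.2) P)
    (hnonneg : ∀ᵐ x ∂L, 0 ≤ x)
    (hL1 : Integrable (fun x => x) L)
    (hmean : ∫ x, x ∂L = 1)
    (hL2 : Integrable (fun x => x^2) L) :
    ∀ᵐ ω ∂P,
      Tendsto
        (fun n : ℕ =>
          (1/2 : ℝ) * ∑ i ∈ Finset.range n,
            |rowSum U n ω i / (∑ j ∈ Finset.range n, rowSum U n ω j) - 1/n|)
        atTop (𝓝 0) := by
  classical
  have hSlaw := CGIMaux.array_slln hmeas hsymm hdist hindep (fun x => x) measurable_id hL1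
  rw [hmean] at hSlaw
  have hWlaw := CGIMaux.array_slln hmeas hsymm hdist hindep (fun x => (x - 1)^2)
    ((measurable_id.sub measurable_const).pow_const 2) (CGIMaux.integrable_g2 hL1 hL2)
  have hQlaw := CGIMaux.QT_tendsto hmeas hdist hindep hL1 hmean hL2
  have hposlaw : ∀ᵐ ω ∂P, ∀ i j, 0 ≤ U i j ω := by
    rw [ae_all_iff]
    intro i
    rw [ae_all_iff]
    intro j
    have h := hnonneg
    rw [← hdist i j] at h
    exact ae_of_ae_map (hmeas i j).aemeasurable h
  filter_upwards [hSlaw, hWlaw, hQlaw, hposlaw] with ω hSω hWω hQω hposω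
  set σ2 := ∫ x, (x - 1)^2 ∂L with hσ2
  set Ssum : ℕ → ℝ := fun n => ∑ i ∈ Finset.range n, ∑ j ∈ Finset.range n, U i j ω with hSsum
  set Wsum : ℕ → ℝ := fun n =>
    ∑ i ∈ Finset.range n, ∑ j ∈ Finset.range n, (U i j ω - 1)^2 with hWsum
  have hev : ∀ᶠ n : ℕ in atTop, (1/2 : ℝ) < ((n:ℝ)^2)⁻¹ * Ssum n :=
    hSω.eventually (eventually_gt_nhds (by norm_num : (1/2 : ℝ) < 1))
  have hn0 : Tendsto (fun n : ℕ => ((n : ℝ))⁻¹) atTop (𝓝 0) :=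
    tendsto_inv_atTop_zero.comp tendsto_natCast_atTop_atTop
  have hSdiv : Tendsto (fun n : ℕ => Ssum n / ((n:ℝ)^2)) atTop (𝓝 1) := by
    apply hSω.congr
    intro n
    rw [inv_mul_eq_div]
  have hG : Tendsto (fun n : ℕ => (1/2 : ℝ) * |1 - Ssum n / ((n:ℝ)^2)|
      + (1/2) * Real.sqrt ((n:ℝ)⁻¹ * (((n:ℝ)^2)⁻¹ * Wsum n)
          + ((n:ℝ)^3)⁻¹ * CGIMaux.QT U n ω))
      atTop (𝓝 ((1/2 : ℝ) * |1 - 1| + (1/2) * Real.sqrt (0 * σ2 + 0))) :=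
    (((tendsto_const_nhds.sub hSdiv).abs).const_mul _).add
      ((((hn0.mul hWω).add hQω).sqrt).const_mul _)
  have hlim0 : ((1/2 : ℝ) * |1 - 1| + (1/2) * Real.sqrt (0 * σ2 + 0)) = 0 := by
    simp
  rw [hlim0] at hG
  apply squeeze_zero' (Filter.Eventually.of_forall (fun n => by positivity)) _ hG
  filter_upwards [hev, eventually_ge_atTop 1] with n hevn hn1
  have hnR : (0:ℝ) < (n:ℝ) := by exact_mod_cast hn1
  have hinvpos : (0:ℝ) < ((n:ℝ)^2)⁻¹ := by positivity
  have hSpos : 0 < Ssum n := by nlinarith [hevn]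
  have hρnn : ∀ i, 0 ≤ rowSum U n ω i := fun i => Finset.sum_nonneg (fun j _ => hposω i j)
  have hSrow : ∑ j ∈ Finset.range n, rowSum U n ω j = Ssum n := rfl
  have hdb := CGIMaux.det_bound n hn1 (rowSum U n ω) hρnn (by rw [hSrow]; exact hSpos)
  refine hdb.trans (le_of_eq ?_)
  have hident := CGIMaux.rho_identity (U := U) hsymm n ω
  have harg : ((n:ℝ)^3)⁻¹ * ∑ i ∈ Finset.range n, (rowSum U n ω i - (n:ℝ))^2
      = (n:ℝ)⁻¹ * (((n:ℝ)^2)⁻¹ * Wsum n) + ((n:ℝ)^3)⁻¹ * CGIMaux.QT U n ω := by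
    have hL : ∑ i ∈ Finset.range n, (rowSum U n ω i - (n:ℝ))^2
        = Wsum n + CGIMaux.QT U n ω := hident
    rw [hL]
    have hnne : (n:ℝ) ≠ 0 := ne_of_gt hnR
    field_simp
  rw [hSrow, harg]
end

section
/- Almost surely, (1/n)·Σ_{i,j=1}^n (√n·S_{i,j} − U_{i,j}/√n)² = O(δ_n²) as n → ∞, where δ_n = max_{1 ≤ i ≤ n} |ρ_i/n − 1| and S_{i,j} = U_{i,j}/√(ρ_i ρ_j); that is, almost surely there is a constant C such that for all large n this normalized squared Hilbert–Schmidt distance between √n·S and the matrix W̃ with entries W̃_{i,j} = U_{i,j}/√n is at most C·δ_n². -/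
open MeasureTheory ProbabilityTheory Filter Topology


lemma heq_aux {nn a b u : ℝ} (hn : 0 < nn) (ha : 0 < a) (hb : 0 < b) :
    Real.sqrt nn * (u / Real.sqrt (a*b)) - u / Real.sqrt nn
      = (u / Real.sqrt nn) * (1 / Real.sqrt (a/nn) * (1 / Real.sqrt (b/nn)) - 1) := by
  have hsqrtab : Real.sqrt (a*b)
      = (Real.sqrt nn * Real.sqrt (a/nn)) * (Real.sqrt nn * Real.sqrt (b/nn)) := by
    rw [← Real.sqrt_mul hn.le (a/nn), ← Real.sqrt_mul hn.le (b/nn)]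
    have e1 : nn * (a/nn) = a := by field_simp
    have e2 : nn * (b/nn) = b := by field_simp
    rw [e1, e2, ← Real.sqrt_mul ha.le b]
  have hsn : 0 < Real.sqrt nn := Real.sqrt_pos.2 hn
  have hsa : 0 < Real.sqrt (a/nn) := Real.sqrt_pos.2 (by positivity)
  have hsb : 0 < Real.sqrt (b/nn) := Real.sqrt_pos.2 (by positivity)
  rw [hsqrtab]
  set sn := Real.sqrt nn
  set sa := Real.sqrt (a/nn)
  set sb := Real.sqrt (b/nn)
  field_simp


/-- Reindexing an independent family along an injective map. -/
lemma iIndepFun_comp_right {Ω ι κ β : Type*} [MeasurableSpace Ω] {μ : Measure Ω}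
    [mβ : MeasurableSpace β] {f : ι → Ω → β}
    (h : iIndepFun f μ) {g : κ → ι} (hg : Function.Injective g) :
    iIndepFun (fun k => f (g k)) μ := by
  classical
  rw [iIndepFun_iff_measure_inter_preimage_eq_mul] at h ⊢
  intro S sets hsets
  set sets' : ι → Set β := fun t => if h : ∃ k ∈ S, g k = t then sets h.choose else Set.univ
    with hsets'def
  have hgk : ∀ k ∈ S, sets' (g k) = sets k := by
    intro k hk
    have hex : ∃ k' ∈ S, g k' = g k := ⟨k, hk, rfl⟩
    simp only [sets', dif_pos hex]
    have hc := hex.choose_spec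
    rw [hg hc.2]
  have hmeas' : ∀ t, t ∈ S.image g → MeasurableSet (sets' t) := by
    intro t ht
    by_cases hex : ∃ k ∈ S, g k = t
    · simp only [sets', dif_pos hex]
      exact hsets _ hex.choose_spec.1
    · simp only [sets', dif_neg hex]
      exact MeasurableSet.univ
  have key := h (S.image g) (sets := sets') hmeas'
  have hL : (⋂ t ∈ S.image g, f t ⁻¹' sets' t) = ⋂ k ∈ S, f (g k) ⁻¹' sets k := by
    ext ω
    simp only [Set.mem_iInter, Finset.mem_image]
    constructor
    · intro H k hk
      have := H (g k) ⟨k, hk, rfl⟩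
      rwa [hgk k hk] at this
    · rintro H t ⟨k, hk, rfl⟩
      rw [hgk k hk]
      exact H k hk
  have hR : (∏ t ∈ S.image g, μ (f t ⁻¹' sets' t)) = ∏ k ∈ S, μ (f (g k) ⁻¹' sets k) := by
    rw [Finset.prod_image (fun k _ k' _ e => hg e)]
    exact Finset.prod_congr rfl fun k hk => by rw [hgk k hk]
  rw [hL, hR] at key
  exact key


/-- Triangular numbers. -/
def tri : ℕ → ℕ
  | 0 => 0
  | n + 1 => tri n + (n + 1)

/-- Enumeration of pairs `(i, j)` with `i ≤ j`, inverse to `(i,j) ↦ tri j + i`. -/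
def decTri : ℕ → ℕ × ℕ
  | 0 => (0, 0)
  | k + 1 => if (decTri k).1 = (decTri k).2 then (0, (decTri k).2 + 1)
      else ((decTri k).1 + 1, (decTri k).2)

lemma tri_mono : Monotone tri :=
  monotone_nat_of_le_succ fun n => by simp [tri]

lemma decTri_le (k : ℕ) : (decTri k).1 ≤ (decTri k).2 := by
  induction k with
  | zero => simp [decTri]
  | succ k ih =>
      rw [decTri]
      split_ifs with h
      · simp
      · simp only
        omega

lemma enc_decTri (k : ℕ) : tri (decTri k).2 + (decTri k).1 = k := by
  induction k with
  | zero => simp [decTri, tri]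
  | succ k ih =>
      have hle := decTri_le k
      rw [decTri]
      split_ifs with h
      · simp only [tri]
        omega
      · simp only
        omega

lemma enc_lt_tri {i j n : ℕ} (hij : i ≤ j) (hj : j < n) : tri j + i < tri n := by
  have h1 : tri j + i < tri (j + 1) := by simp only [tri]; omega
  exact lt_of_lt_of_le h1 (tri_mono hj)

lemma enc_le_aux {i j i' j' : ℕ} (hij : i ≤ j) (hi'j' : i' ≤ j')
    (h : tri j + i ≤ tri j' + i') : j ≤ j' := by
  by_contra hc
  push_neg at hc
  have := enc_lt_tri hi'j' hc
  omega

lemma enc_inj {i j i' j' : ℕ} (hij : i ≤ j) (hi'j' : i' ≤ j')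
    (h : tri j + i = tri j' + i') : i = i' ∧ j = j' := by
  have h1 : j = j' := le_antisymm (enc_le_aux hij hi'j' h.le) (enc_le_aux hi'j' hij h.ge)
  subst h1
  omega

lemma decTri_enc {i j : ℕ} (hij : i ≤ j) : decTri (tri j + i) = (i, j) := by
  have h := enc_decTri (tri j + i)
  have h2 := enc_inj (decTri_le (tri j + i)) hij h
  have := h2.1; have := h2.2
  ext <;> simp [h2.1, h2.2]

lemma decTri_snd_lt {k n : ℕ} (hk : k < tri n) : (decTri k).2 < n := by
  by_contra hc
  push_neg at hc
  have h1 : tri n ≤ tri (decTri k).2 := tri_mono hc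
  have := enc_decTri k
  omega

lemma sum_range_tri {M : Type*} [AddCommMonoid M] (f : ℕ × ℕ → M) (n : ℕ) :
    ∑ k ∈ Finset.range (tri n), f (decTri k)
      = ∑ p ∈ (Finset.range n ×ˢ Finset.range n).filter (fun p => p.1 ≤ p.2), f p := by
  apply Finset.sum_nbij' (i := fun k => decTri k) (j := fun p => tri p.2 + p.1)
  · intro k hk
    simp only [Finset.mem_filter, Finset.mem_product, Finset.mem_range] at *
    have h1 := decTri_snd_lt hk
    have h2 := decTri_le k
    exact ⟨⟨lt_of_le_of_lt h2 h1, h1⟩, h2⟩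
  · intro p hp
    simp only [Finset.mem_filter, Finset.mem_product, Finset.mem_range] at *
    exact enc_lt_tri hp.2 hp.1.2
  · intro k _; exact enc_decTri k
  · intro p hp
    simp only [Finset.mem_filter, Finset.mem_product, Finset.mem_range] at hp
    exact decTri_enc hp.2
  · intro k _; rfl

lemma le_tri (n : ℕ) : n ≤ tri n := by
  induction n with
  | zero => simp [tri]
  | succ n ih => simp only [tri]; omega

lemma tri_le_sq (n : ℕ) : tri n ≤ n * n := by
  induction n with
  | zero => simp [tri]
  | succ n ih => simp only [tri]; nlinarith

lemma tendsto_tri_atTop : Tendsto tri atTop atTop :=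
  tendsto_atTop_mono le_tri tendsto_id

lemma decTri_injective : Function.Injective decTri := by
  intro a b h
  have := enc_decTri a
  rw [h] at this
  rw [← this, enc_decTri]


lemma exp_neg_le_quadratic {y : ℝ} (hy : 0 ≤ y) : Real.exp (-y) ≤ 1 - y + y ^ 2 := by
  have h1 : y + 1 ≤ Real.exp y := Real.add_one_le_exp y
  have h2 : Real.exp (-y) = (Real.exp y)⁻¹ := Real.exp_neg y
  have h3 : (0:ℝ) < Real.exp y := Real.exp_pos y
  have h4 : (0:ℝ) < 1 + y := by linarith
  have h5 : Real.exp (-y) ≤ (1 + y)⁻¹ := by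
    rw [h2]
    exact inv_anti₀ h4 (by linarith)
  have h6 : (1 + y)⁻¹ ≤ 1 - y + y ^ 2 := by
    rw [inv_le_iff_one_le_mul₀ h4]
    nlinarith
  linarith

lemma inv_sqrt_abs_le {x : ℝ} (hx : 1 / 2 ≤ x) : |1 / Real.sqrt x - 1| ≤ |x - 1| := by
  have hx0 : (0:ℝ) < x := by linarith
  set s := Real.sqrt x with hsdef
  have hs : 0 < s := Real.sqrt_pos.2 hx0
  have hs2 : s ^ 2 = x := Real.sq_sqrt hx0.le
  have hhalf : (1:ℝ)/2 ≤ s := by nlinarith [Real.sqrt_nonneg x]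
  have e1 : |1 / s - 1| = |1 - s| / s := by
    rw [show 1 / s - 1 = (1 - s) / s by field_simp, abs_div, abs_of_pos hs]
  have e2 : |x - 1| = |1 - s| * (s + 1) := by
    have hx1 : x - 1 = (s - 1) * (s + 1) := by nlinarith
    rw [hx1, abs_mul, abs_of_pos (by linarith : (0:ℝ) < s + 1), abs_sub_comm]
  rw [e1, e2, div_le_iff₀ hs]
  nlinarith [abs_nonneg (1 - s)]

lemma inv_sqrt_le_sqrt_two {x : ℝ} (hx : 1 / 2 ≤ x) : 1 / Real.sqrt x ≤ Real.sqrt 2 := by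
  have hx0 : (0:ℝ) < x := by linarith
  have hs : 0 < Real.sqrt x := Real.sqrt_pos.2 hx0
  rw [div_le_iff₀ hs]
  have h1 : (1:ℝ) = Real.sqrt 2 * Real.sqrt (1/2) := by
    rw [← Real.sqrt_mul (by norm_num)]
    norm_num
  rw [h1]
  exact mul_le_mul_of_nonneg_left (Real.sqrt_le_sqrt hx) (Real.sqrt_nonneg 2)

lemma prod_inv_sqrt_bound {x y δ : ℝ} (hx : 1/2 ≤ x) (hy : 1/2 ≤ y)
    (hdx : |x - 1| ≤ δ) (hdy : |y - 1| ≤ δ) :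
    |1 / Real.sqrt x * (1 / Real.sqrt y) - 1| ≤ 3 * δ := by
  have hδ : 0 ≤ δ := le_trans (abs_nonneg _) hdx
  have h1 : |1 / Real.sqrt x * (1 / Real.sqrt y) - 1|
      ≤ (1 / Real.sqrt x) * |1 / Real.sqrt y - 1| + |1 / Real.sqrt x - 1| := by
    have : 1 / Real.sqrt x * (1 / Real.sqrt y) - 1
        = (1 / Real.sqrt x) * (1 / Real.sqrt y - 1) + (1 / Real.sqrt x - 1) := by ring
    rw [this]
    refine le_trans (abs_add_le _ _) ?_
    rw [abs_mul, abs_of_pos]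
    have hx0 : (0:ℝ) < x := by linarith
    positivity
  have h2 : |1 / Real.sqrt x - 1| ≤ δ := le_trans (inv_sqrt_abs_le hx) hdx
  have h3 : |1 / Real.sqrt y - 1| ≤ δ := le_trans (inv_sqrt_abs_le hy) hdy
  have h4 : 1 / Real.sqrt x ≤ 2 := by
    refine le_trans (inv_sqrt_le_sqrt_two hx) ?_
    nlinarith [Real.sq_sqrt (by norm_num : (0:ℝ) ≤ 2), Real.sqrt_nonneg 2]
  have h5 : (0:ℝ) < 1 / Real.sqrt x := by
    have hx0 : (0:ℝ) < x := by linarith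
    have := Real.sqrt_pos.2 hx0
    positivity
  calc |1 / Real.sqrt x * (1 / Real.sqrt y) - 1|
      ≤ (1 / Real.sqrt x) * |1 / Real.sqrt y - 1| + |1 / Real.sqrt x - 1| := h1
    _ ≤ 2 * δ + δ := by
        have := mul_le_mul h4 h3 (abs_nonneg _) (by norm_num)
        linarith
    _ ≤ 3 * δ := by linarith

lemma square_le_two_triangle (n : ℕ) (g : ℕ → ℕ → ℝ) (hg0 : ∀ i j, 0 ≤ g i j)
    (hgs : ∀ i j, g i j = g j i) :
    ∑ p ∈ Finset.range n ×ˢ Finset.range n, g p.1 p.2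
      ≤ 2 * ∑ p ∈ (Finset.range n ×ˢ Finset.range n).filter (fun p => p.1 ≤ p.2), g p.1 p.2 := by
  classical
  set sq := Finset.range n ×ˢ Finset.range n with hsq
  have hsplit := Finset.sum_filter_add_sum_filter_not sq (fun p => p.1 ≤ p.2)
    (fun p => g p.1 p.2)
  have h2 : ∑ p ∈ sq.filter (fun p => ¬ p.1 ≤ p.2), g p.1 p.2
      = ∑ p ∈ sq.filter (fun p => p.2 < p.1), g p.1 p.2 := by
    apply Finset.sum_congr _ (fun _ _ => rfl)
    apply Finset.filter_congr
    intro p _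
    simp [not_le]
  have h3 : ∑ p ∈ sq.filter (fun p => p.2 < p.1), g p.1 p.2
      = ∑ p ∈ sq.filter (fun p => p.1 < p.2), g p.1 p.2 := by
    apply Finset.sum_nbij' (i := Prod.swap) (j := Prod.swap)
    · intro p hp
      simp only [hsq, Finset.mem_filter, Finset.mem_product, Finset.mem_range, Prod.fst_swap,
        Prod.snd_swap] at *
      tauto
    · intro p hp
      simp only [hsq, Finset.mem_filter, Finset.mem_product, Finset.mem_range, Prod.fst_swap,
        Prod.snd_swap] at *
      tauto
    · intro p _; rfl
    · intro p _; rfl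
    · intro p _
      simp only [Prod.fst_swap, Prod.snd_swap]
      exact hgs p.1 p.2
  have h4 : ∑ p ∈ sq.filter (fun p => p.1 < p.2), g p.1 p.2
      ≤ ∑ p ∈ sq.filter (fun p => p.1 ≤ p.2), g p.1 p.2 := by
    apply Finset.sum_le_sum_of_subset_of_nonneg
    · exact Finset.monotone_filter_right sq (fun p _ hp => le_of_lt hp)
    · intro p _ _; exact hg0 p.1 p.2
  linarith

/-- The symmetrized matrix `S_{i,j} = U_{i,j}/√(ρ_i ρ_j)`. -/
noncomputable def Smat {Ω : Type*} (U : ℕ → ℕ → Ω → ℝ) (n : ℕ) (ω : Ω) :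
    Matrix (Fin n) (Fin n) ℝ := fun i j =>
  U i j ω / Real.sqrt (rowSum U n ω i * rowSum U n ω j)

/-- `δ_n = max_{i<n} |ρ_i/n − 1|`. -/
noncomputable def deltaMax {Ω : Type*} (U : ℕ → ℕ → Ω → ℝ) (n : ℕ) (ω : Ω) : ℝ :=
  (((Finset.range n).sup fun i => ‖rowSum U n ω i / n - 1‖₊ : NNReal) : ℝ)

/-- **Hilbert–Schmidt comparison (estimate (2.10) in the proof of Theorem 1.1).**
Almost surely, `(1/n)·∑_{i,j} (√n·S_{i,j} − U_{i,j}/√n)² = O(δ_n²)`: there is a constant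
`C` such that for all large `n` this normalized squared Hilbert–Schmidt distance between
`√n·S` and `W̃ = U/√n` is at most `C·δ_n²`. -/
theorem hilbert_schmidt_comparison
    {Ω : Type*} [MeasurableSpace Ω] (P : Measure Ω) [IsProbabilityMeasure P]
    (U : ℕ → ℕ → Ω → ℝ) (L : Measure ℝ) [IsProbabilityMeasure L]
    (hmeas : ∀ i j, Measurable (U i j))
    (hsymm : ∀ i j, U i j = U j i)
    (hdist : ∀ i j, Measure.map (U i j) P = L)
    (hindep : iIndepFun
      (fun p : {q : ℕ × ℕ // q.1 ≤ q.2} => U p.1.1 p.1.2) P)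
    (hnonneg : ∀ᵐ x ∂L, 0 ≤ x)
    (hL1 : Integrable (fun x => x) L)
    (hmean : ∫ x, x ∂L = 1)
    (σ : ℝ) (hσ : 0 < σ)
    (hL2 : Integrable (fun x => x^2) L)
    (hvar : ∫ x, (x - 1)^2 ∂L = σ^2) :
    ∀ᵐ ω ∂P, ∃ C : ℝ, ∀ᶠ n : ℕ in atTop,
      (1/n : ℝ) * ∑ i : Fin n, ∑ j : Fin n,
          (Real.sqrt n * Smat U n ω i j - U i j ω / Real.sqrt n)^2
        ≤ C * (deltaMax U n ω)^2 := by
  set m : ℝ := ∫ x, x ^ 2 ∂L with hmdef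
  -- the second moment equals 1 + σ²
  have hm1 : m = 1 + σ ^ 2 := by
    have e1 : (fun x : ℝ => (x - 1) ^ 2) = fun x => x ^ 2 - 2 * x + 1 := by
      funext x; ring
    rw [e1] at hvar
    have i1 : Integrable (fun x : ℝ => x ^ 2 - 2 * x) L := hL2.sub (hL1.const_mul 2)
    rw [integral_add i1 (integrable_const 1), integral_sub hL2 (hL1.const_mul 2),
      integral_const_mul, hmean, integral_const, probReal_univ] at hvar
    simp at hvar
    rw [hmdef]
    linarith
  have hm_ge : 1 ≤ m := by nlinarith
  have hm_pos : 0 < m := by linarith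
  -- a.s. all entries nonnegative
  have hnn : ∀ᵐ ω ∂P, ∀ i j, 0 ≤ U i j ω := by
    rw [ae_all_iff]
    intro i
    rw [ae_all_iff]
    intro j
    have h0 : ∀ᵐ x ∂(Measure.map (U i j) P), 0 ≤ x := by rw [hdist]; exact hnonneg
    exact (ae_map_iff (hmeas i j).aemeasurable measurableSet_Ici).mp h0
  -- each row is an independent family
  have hrow : ∀ i : ℕ, iIndepFun (fun j : ℕ => U i j) P := by
    intro i
    have hinj : Function.Injective
        (fun j : ℕ => (⟨(min i j, max i j), min_le_max⟩ : {q : ℕ × ℕ // q.1 ≤ q.2})) := by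
      intro a b h
      simp only [Subtype.mk.injEq, Prod.mk.injEq] at h
      have h1 : min i a + max i a = min i b + max i b := by rw [h.1, h.2]
      rw [min_add_max, min_add_max] at h1
      omega
    have h0 := iIndepFun_comp_right hindep hinj
    have he : (fun j : ℕ => U i j) = fun j : ℕ => U (min i j) (max i j) := by
      funext j
      rcases le_total i j with h | h
      · rw [min_eq_left h, max_eq_right h]
      · rw [min_eq_right h, max_eq_left h, hsymm]
    rw [he]
    exact h0
  -- Chernoff bound for a single row sum
  set lam : ℝ := 1 / (4 * m) with hlamdef
  have hlam_pos : 0 < lam := by positivity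
  set r : ℝ := Real.exp (-lam / 4) with hrdef
  have hr0 : 0 < r := Real.exp_pos _
  have hr1 : r < 1 := by
    rw [hrdef, Real.exp_lt_one_iff]
    linarith
  have hIntExp : Integrable (fun x => Real.exp (-lam * x)) L := by
    apply Integrable.mono' (integrable_const 1)
    · exact ((measurable_id.const_mul (-lam)).exp).aestronglyMeasurable
    · filter_upwards [hnonneg] with x hx
      rw [Real.norm_eq_abs, abs_of_pos (Real.exp_pos _), Real.exp_le_one_iff]
      have : 0 ≤ lam * x := mul_nonneg hlam_pos.le hx
      linarith
  have hIL_nonneg : 0 ≤ ∫ x, Real.exp (-lam * x) ∂L :=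
    integral_nonneg fun x => (Real.exp_pos _).le
  have hIL_le : ∫ x, Real.exp (-lam * x) ∂L ≤ Real.exp (-(3 / 4) * lam) := by
    have hptw : ∀ᵐ x ∂L, Real.exp (-lam * x) ≤ 1 - lam * x + lam ^ 2 * x ^ 2 := by
      filter_upwards [hnonneg] with x hx
      have h1 := exp_neg_le_quadratic (y := lam * x) (mul_nonneg hlam_pos.le hx)
      rw [neg_mul]
      nlinarith
    have hInt2 : Integrable (fun x : ℝ => 1 - lam * x + lam ^ 2 * x ^ 2) L :=
      ((integrable_const 1).sub (hL1.const_mul lam)).add (hL2.const_mul (lam ^ 2))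
    have hmono := integral_mono_ae hIntExp hInt2 hptw
    have i1 : Integrable (fun x : ℝ => 1 - lam * x) L := (integrable_const 1).sub (hL1.const_mul lam)
    rw [integral_add i1 (hL2.const_mul (lam ^ 2)),
      integral_sub (integrable_const 1) (hL1.const_mul lam),
      integral_const_mul, integral_const_mul, hmean, integral_const, probReal_univ,
      smul_eq_mul, mul_one, ← hmdef] at hmono
    have heq : 1 - lam * 1 + lam ^ 2 * m = 1 + (-(3 / 4) * lam) := by
      have : lam * m = 1 / 4 := by
        rw [hlamdef]; field_simp
      nlinarith
    have hle2 : (-(3 / 4) * lam) + 1 ≤ Real.exp (-(3 / 4) * lam) := Real.add_one_le_exp _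
    linarith
  have hcher : ∀ n : ℕ, ∀ i : ℕ,
      (P {ω | rowSum U n ω i ≤ (n : ℝ) / 2}).toReal ≤ r ^ n := by
    intro n i
    have hXmeas : Measurable (fun ω => rowSum U n ω i) := by
      apply Finset.measurable_sum
      intro j _
      exact hmeas i j
    have hXsum : (fun ω => rowSum U n ω i) = ∑ j ∈ Finset.range n, U i j := by
      funext ω
      rw [rowSum, Finset.sum_apply]
    have hint : Integrable (fun ω => Real.exp (-lam * rowSum U n ω i)) P := by
      apply Integrable.mono' (integrable_const 1)
      · exact ((hXmeas.const_mul (-lam)).exp).aestronglyMeasurable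
      · filter_upwards [hnn] with ω hω
        rw [Real.norm_eq_abs, abs_of_pos (Real.exp_pos _), Real.exp_le_one_iff]
        have hX0 : 0 ≤ rowSum U n ω i := Finset.sum_nonneg fun j _ => hω i j
        have : 0 ≤ lam * rowSum U n ω i := mul_nonneg hlam_pos.le hX0
        linarith
    have hmark := measure_le_le_exp_mul_mgf (X := fun ω => rowSum U n ω i) (μ := P)
      ((n : ℝ) / 2) (t := -lam) (by linarith) hint
    have hmgf : mgf (fun ω => rowSum U n ω i) P (-lam) = (∫ x, Real.exp (-lam * x) ∂L) ^ n := by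
      rw [hXsum, (hrow i).mgf_sum (fun j => hmeas i j) (Finset.range n)]
      have hone : ∀ j ∈ Finset.range n, mgf (U i j) P (-lam) = ∫ x, Real.exp (-lam * x) ∂L := by
        intro j _
        have hg : AEStronglyMeasurable (fun x : ℝ => Real.exp (-lam * x))
            (Measure.map (U i j) P) :=
          ((measurable_id.const_mul (-lam)).exp).aestronglyMeasurable
        rw [mgf, ← hdist i j, integral_map (hmeas i j).aemeasurable hg]
      rw [Finset.prod_congr rfl hone, Finset.prod_const, Finset.card_range]
    rw [hmgf] at hmark
    refine le_trans hmark ?_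
    have h1 : (∫ x, Real.exp (-lam * x) ∂L) ^ n ≤ (Real.exp (-(3 / 4) * lam)) ^ n :=
      pow_le_pow_left₀ hIL_nonneg hIL_le n
    calc Real.exp (-(-lam) * ((n : ℝ) / 2)) * (∫ x, Real.exp (-lam * x) ∂L) ^ n
        ≤ Real.exp (lam * ((n : ℝ) / 2)) * (Real.exp (-(3 / 4) * lam)) ^ n := by
          rw [neg_neg]
          exact mul_le_mul_of_nonneg_left h1 (Real.exp_pos _).le
      _ = r ^ n := by
          rw [hrdef, ← Real.exp_nat_mul, ← Real.exp_nat_mul, ← Real.exp_add]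
          congr 1
          ring
  -- Borel–Cantelli: eventually all row sums exceed n/2
  have hBC : ∀ᵐ ω ∂P, ∀ᶠ n : ℕ in atTop, ∀ i, i < n → (n : ℝ) / 2 < rowSum U n ω i := by
    set B : ℕ → Set Ω := fun n => {ω | ∃ i, i < n ∧ rowSum U n ω i ≤ (n : ℝ) / 2} with hBdef
    have hBle : ∀ n, P (B n) ≤ ENNReal.ofReal ((n : ℝ) * r ^ n) := by
      intro n
      have hsub : B n ⊆ ⋃ i ∈ Finset.range n, {ω | rowSum U n ω i ≤ (n : ℝ) / 2} := by
        rintro ω ⟨i, hi, hle⟩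
        exact Set.mem_biUnion (Finset.mem_range.2 hi) hle
      calc P (B n) ≤ ∑ i ∈ Finset.range n, P {ω | rowSum U n ω i ≤ (n : ℝ) / 2} :=
            le_trans (measure_mono hsub) (measure_biUnion_finset_le _ _)
        _ ≤ ∑ _i ∈ Finset.range n, ENNReal.ofReal (r ^ n) := by
            apply Finset.sum_le_sum
            intro i _
            rw [ENNReal.le_ofReal_iff_toReal_le (measure_ne_top P _) (by positivity)]
            exact hcher n i
        _ = ENNReal.ofReal ((n : ℝ) * r ^ n) := by
            rw [Finset.sum_const, Finset.card_range, nsmul_eq_mul,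
              ENNReal.ofReal_mul (by positivity : (0:ℝ) ≤ (n:ℝ))]
            congr 1
            exact (ENNReal.ofReal_natCast n).symm
    have hsummable : Summable (fun n : ℕ => (n : ℝ) * r ^ n) := by
      have := summable_pow_mul_geometric_of_norm_lt_one (k := 1)
        (r := r) (by rw [Real.norm_eq_abs, abs_of_pos hr0]; exact hr1)
      simpa using this
    have hsum : (∑' n, P (B n)) ≠ ⊤ := by
      have h1 : (∑' n, P (B n)) ≤ ∑' (n : ℕ), ENNReal.ofReal ((n : ℝ) * r ^ n) :=
        ENNReal.tsum_le_tsum hBle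
      have h2 : (∑' (n : ℕ), ENNReal.ofReal ((n : ℝ) * r ^ n))
          = ENNReal.ofReal (∑' (n : ℕ), (n : ℝ) * r ^ n) :=
        (ENNReal.ofReal_tsum_of_nonneg (fun n => by positivity) hsummable).symm
      rw [h2] at h1
      exact ne_top_of_le_ne_top ENNReal.ofReal_ne_top h1
    filter_upwards [ae_eventually_notMem hsum] with ω hω
    filter_upwards [hω] with n hn
    intro i hi
    by_contra hc
    push_neg at hc
    exact hn ⟨i, hi, hc⟩
  -- Strong law of large numbers for the squared entries
  have hsq : Measurable (fun x : ℝ => x ^ 2) := measurable_id.pow_const 2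
  have hSL : ∀ᵐ ω ∂P, ∀ᶠ n : ℕ in atTop,
      ∑ k ∈ Finset.range (tri n), (U (decTri k).1 (decTri k).2 ω) ^ 2
        ≤ (m + 1) * (tri n : ℝ) := by
    set Y : ℕ → Ω → ℝ := fun k ω => (U (decTri k).1 (decTri k).2 ω) ^ 2 with hYdef
    have hYmeas : ∀ k, Measurable (Y k) := fun k => (hmeas _ _).pow_const 2
    have hYmap : ∀ k, Measure.map (Y k) P = Measure.map (fun x : ℝ => x ^ 2) L := by
      intro k
      rw [← hdist (decTri k).1 (decTri k).2, Measure.map_map hsq (hmeas _ _)]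
      rfl
    have hYint : Integrable (Y 0) P := by
      have h0 : Integrable (fun x : ℝ => x ^ 2) (Measure.map (U 0 0) P) := by
        rw [hdist]; exact hL2
      exact (integrable_map_measure hsq.aestronglyMeasurable (hmeas 0 0).aemeasurable).mp h0
    have hYindep : Pairwise (Function.onFun (IndepFun · · P) Y) := by
      intro k l hkl
      have hne : (⟨decTri k, decTri_le k⟩ : {q : ℕ × ℕ // q.1 ≤ q.2})
          ≠ ⟨decTri l, decTri_le l⟩ := by
        intro h
        exact hkl (decTri_injective (congrArg Subtype.val h))
      exact (hindep.indepFun hne).comp hsq hsq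
    have hYident : ∀ k, IdentDistrib (Y k) (Y 0) P P := fun k =>
      ⟨(hYmeas k).aemeasurable, (hYmeas 0).aemeasurable, by rw [hYmap, hYmap]⟩
    have hmeanY : P[Y 0] = m := by
      have hg : AEStronglyMeasurable (fun x : ℝ => x ^ 2) (Measure.map (U 0 0) P) :=
        hsq.aestronglyMeasurable
      calc P[Y 0] = ∫ x, x ^ 2 ∂(Measure.map (U 0 0) P) :=
            (integral_map (hmeas 0 0).aemeasurable hg).symm
        _ = m := by rw [hdist]
    have hslln := strong_law_ae Y hYint hYindep hYident
    rw [hmeanY] at hslln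
    filter_upwards [hslln] with ω hω
    have h2 : Tendsto (fun n : ℕ => (tri n : ℝ)⁻¹ • ∑ k ∈ Finset.range (tri n), Y k ω)
        atTop (𝓝 m) := hω.comp tendsto_tri_atTop
    have h3 : ∀ᶠ n : ℕ in atTop,
        (tri n : ℝ)⁻¹ • ∑ k ∈ Finset.range (tri n), Y k ω < m + 1 :=
      Tendsto.eventually_lt_const (by linarith) h2
    filter_upwards [h3, eventually_ge_atTop 1] with n hn1 hn2
    have htpos : (0:ℝ) < (tri n : ℝ) := by
      have h4 : 1 ≤ tri n := le_trans hn2 (le_tri n)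
      exact_mod_cast h4
    rw [smul_eq_mul, inv_mul_lt_iff₀ htpos] at hn1
    have he : ∑ k ∈ Finset.range (tri n), (U (decTri k).1 (decTri k).2 ω) ^ 2
        = ∑ k ∈ Finset.range (tri n), Y k ω := rfl
    rw [he]
    nlinarith
  -- Final assembly
  filter_upwards [hnn, hBC, hSL] with ω hω0 hω1 hω2
  refine ⟨18 * (m + 1), ?_⟩
  filter_upwards [hω1, hω2, eventually_ge_atTop 1] with n hn1 hn2 hn3
  have hnpos : (0:ℝ) < n := by exact_mod_cast hn3
  set δ : ℝ := deltaMax U n ω with hδdef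
  have hδ0 : 0 ≤ δ := NNReal.coe_nonneg _
  have hδi : ∀ i : ℕ, i < n → |rowSum U n ω i / n - 1| ≤ δ := by
    intro i hi
    have h1 : ‖rowSum U n ω i / n - 1‖₊
        ≤ (Finset.range n).sup (fun i => ‖rowSum U n ω i / n - 1‖₊) :=
      Finset.le_sup (f := fun i => ‖rowSum U n ω i / (n:ℝ) - 1‖₊) (Finset.mem_range.2 hi)
    have h2 := NNReal.coe_le_coe.2 h1
    rw [coe_nnnorm, Real.norm_eq_abs] at h2
    exact h2
  have hterm : ∀ i j : Fin n,
      (Real.sqrt n * Smat U n ω i j - U (i:ℕ) (j:ℕ) ω / Real.sqrt n) ^ 2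
        ≤ 9 * δ ^ 2 * (U (i:ℕ) (j:ℕ) ω) ^ 2 / n := by
    intro i j
    simp only [Smat]
    set a : ℝ := rowSum U n ω (i:ℕ) with hadef
    set b : ℝ := rowSum U n ω (j:ℕ) with hbdef
    set u : ℝ := U (i:ℕ) (j:ℕ) ω with hudef
    have ha : (n:ℝ)/2 < a := hn1 (i:ℕ) i.isLt
    have hb : (n:ℝ)/2 < b := hn1 (j:ℕ) j.isLt
    have ha0 : 0 < a := by linarith
    have hb0 : 0 < b := by linarith
    have hu : 0 ≤ u := hω0 _ _
    have hx : 1/2 ≤ a / n := by rw [le_div_iff₀ hnpos]; linarith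
    have hy : 1/2 ≤ b / n := by rw [le_div_iff₀ hnpos]; linarith
    have hdx : |a/n - 1| ≤ δ := hδi _ i.isLt
    have hdy : |b/n - 1| ≤ δ := hδi _ j.isLt
    have heq : Real.sqrt n * (u / Real.sqrt (a*b)) - u / Real.sqrt n
        = (u / Real.sqrt n) * (1 / Real.sqrt (a/n) * (1 / Real.sqrt (b/n)) - 1) :=
      heq_aux hnpos ha0 hb0
    rw [heq, mul_pow]
    have hb1 : |1 / Real.sqrt (a/n) * (1 / Real.sqrt (b/n)) - 1| ≤ 3*δ :=
      prod_inv_sqrt_bound hx hy hdx hdy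
    have h2 : (1 / Real.sqrt (a/n) * (1 / Real.sqrt (b/n)) - 1)^2 ≤ (3*δ)^2 := by
      rw [← sq_abs]
      exact pow_le_pow_left₀ (abs_nonneg _) hb1 2
    have h3 : (u / Real.sqrt n)^2 = u^2 / n := by
      rw [div_pow, Real.sq_sqrt hnpos.le]
    calc (u / Real.sqrt n)^2 * (1 / Real.sqrt (a/n) * (1 / Real.sqrt (b/n)) - 1)^2
        ≤ (u / Real.sqrt n)^2 * (3*δ)^2 :=
          mul_le_mul_of_nonneg_left h2 (sq_nonneg _)
      _ = 9 * δ^2 * u^2 / n := by rw [h3]; ring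
  have hsum1 : ∑ i : Fin n, ∑ j : Fin n,
      (Real.sqrt n * Smat U n ω i j - U (i:ℕ) (j:ℕ) ω / Real.sqrt n) ^ 2
        ≤ ∑ i : Fin n, ∑ j : Fin n, 9 * δ^2 * (U (i:ℕ) (j:ℕ) ω)^2 / n :=
    Finset.sum_le_sum fun i _ => Finset.sum_le_sum fun j _ => hterm i j
  have hsum2 : ∑ i : Fin n, ∑ j : Fin n, 9 * δ^2 * (U (i:ℕ) (j:ℕ) ω)^2 / (n:ℝ)
      = (9 * δ^2 / n) * ∑ p ∈ Finset.range n ×ˢ Finset.range n, (U p.1 p.2 ω)^2 := by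
    calc ∑ i : Fin n, ∑ j : Fin n, 9 * δ^2 * (U (i:ℕ) (j:ℕ) ω)^2 / (n:ℝ)
        = ∑ i ∈ Finset.range n, ∑ j ∈ Finset.range n, 9 * δ^2 * (U i j ω)^2 / (n:ℝ) := by
          rw [Fin.sum_univ_eq_sum_range
            (fun i => ∑ j : Fin n, 9 * δ^2 * (U i (j:ℕ) ω)^2 / (n:ℝ)) n]
          exact Finset.sum_congr rfl fun i _ =>
            Fin.sum_univ_eq_sum_range (fun j => 9 * δ^2 * (U i j ω)^2 / (n:ℝ)) n
      _ = (9 * δ^2 / n) * ∑ i ∈ Finset.range n, ∑ j ∈ Finset.range n, (U i j ω)^2 := by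
          rw [Finset.mul_sum]
          refine Finset.sum_congr rfl fun i _ => ?_
          rw [Finset.mul_sum]
          exact Finset.sum_congr rfl fun j _ => by ring
      _ = (9 * δ^2 / n) * ∑ p ∈ Finset.range n ×ˢ Finset.range n, (U p.1 p.2 ω)^2 := by
          rw [Finset.sum_product' (f := fun i j => (U i j ω)^2)]
  have hsum3 : ∑ p ∈ Finset.range n ×ˢ Finset.range n, (U p.1 p.2 ω)^2
      ≤ 2 * ((m + 1) * ((n:ℝ) * n)) := by
    have h4 := square_le_two_triangle n (fun i j => (U i j ω)^2)
      (fun i j => sq_nonneg _)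
      (fun i j => by show (U i j ω)^2 = (U j i ω)^2; rw [hsymm i j])
    have h5 : ∑ p ∈ (Finset.range n ×ˢ Finset.range n).filter (fun p => p.1 ≤ p.2),
        (U p.1 p.2 ω)^2
        = ∑ k ∈ Finset.range (tri n), (U (decTri k).1 (decTri k).2 ω)^2 :=
      (sum_range_tri (fun p => (U p.1 p.2 ω)^2) n).symm
    have h6 : ((tri n : ℕ) : ℝ) ≤ (n:ℝ) * n := by
      have := tri_le_sq n
      exact_mod_cast this
    have hm1' : (0:ℝ) < m + 1 := by linarith
    calc ∑ p ∈ Finset.range n ×ˢ Finset.range n, (U p.1 p.2 ω)^2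
        ≤ 2 * ∑ p ∈ (Finset.range n ×ˢ Finset.range n).filter (fun p => p.1 ≤ p.2),
            (U p.1 p.2 ω)^2 := h4
      _ ≤ 2 * ((m + 1) * (tri n : ℝ)) := by rw [h5]; linarith [hn2]
      _ ≤ 2 * ((m + 1) * ((n:ℝ) * n)) := by
          apply mul_le_mul_of_nonneg_left _ (by norm_num : (0:ℝ) ≤ 2)
          exact mul_le_mul_of_nonneg_left h6 hm1'.le
  calc (1/(n:ℝ)) * ∑ i : Fin n, ∑ j : Fin n,
        (Real.sqrt n * Smat U n ω i j - U (i:ℕ) (j:ℕ) ω / Real.sqrt n) ^ 2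
      ≤ (1/(n:ℝ)) * ((9 * δ^2 / n) * (2 * ((m + 1) * ((n:ℝ) * n)))) := by
        apply mul_le_mul_of_nonneg_left _ (by positivity : (0:ℝ) ≤ 1/(n:ℝ))
        refine le_trans hsum1 ?_
        rw [hsum2]
        exact mul_le_mul_of_nonneg_left hsum3 (by positivity)
    _ = 18 * (m + 1) * δ^2 := by field_simp; ring
end
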